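/- The leaky ReLU σ(x) = max(x, 0.01x) is the proximal operator of f(z) = (99/2)·min(z,0)²: for every x ∈ ℝ, max(x, 0.01x) is the unique minimizer over z ∈ ℝ of (1/2)(z-x)² + (99/2)·min(z,0)². -/
import Mathlib


/-- Leaky ReLU is the proximal operator of `f(z) = (99/2) min(z,0)²`: for every
`x`, `max x (0.01 x)` is the unique minimizer of
`z ↦ (1/2)(z - x)² + (99/2) min(z,0)²`. -/
theorem leaky_relu_is_prox (x : ℝ) :
    (∀ z : ℝ,
      (1 / 2) * (max x (0.01 * x) - x) ^ 2 + (99 / 2) * (min (max x (0.01 * x)) 0) ^ 2 ≤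
        (1 / 2) * (z - x) ^ 2 + (99 / 2) * (min z 0) ^ 2) ∧
    (∀ z : ℝ,
      (1 / 2) * (z - x) ^ 2 + (99 / 2) * (min z 0) ^ 2 ≤
        (1 / 2) * (max x (0.01 * x) - x) ^ 2 + (99 / 2) * (min (max x (0.01 * x)) 0) ^ 2 →
      z = max x (0.01 * x)) := by
  have hmm : ∀ z : ℝ, (1 / 2) * (z - x) ^ 2 + (99 / 2) * (min z 0) ^ 2 =
      (1 / 2) * (z - x) ^ 2 + (99 / 2) * (min z 0) ^ 2 := fun _ => rfl
  rcases le_or_gt 0 x with hx | hx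
  · have h1 : max x (0.01 * x) = x := max_eq_left (by nlinarith)
    have h2 : min x 0 = 0 := min_eq_right hx
    rw [h1, h2]
    constructor
    · intro z
      rcases le_total z 0 with hz | hz
      · rw [min_eq_left hz]; nlinarith
      · rw [min_eq_right hz]; nlinarith
    · intro z hle
      rcases le_total z 0 with hz | hz
      · rw [min_eq_left hz] at hle; nlinarith
      · rw [min_eq_right hz] at hle; nlinarith
  · have h1 : max x (0.01 * x) = 0.01 * x := max_eq_right (by nlinarith)
    have h2 : min (0.01 * x) 0 = 0.01 * x := min_eq_left (by nlinarith)
    rw [h1, h2]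
    constructor
    · intro z
      rcases le_total z 0 with hz | hz
      · rw [min_eq_left hz]; nlinarith [sq_nonneg (z - 0.01 * x)]
      · rw [min_eq_right hz]; nlinarith [sq_nonneg (z - 0.01 * x)]
    · intro z hle
      rcases le_total z 0 with hz | hz
      · rw [min_eq_left hz] at hle; nlinarith [sq_nonneg (z - 0.01 * x)]
      · rw [min_eq_right hz] at hle; nlinarith [sq_nonneg (z - 0.01 * x), sq_nonneg z]
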